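/- Let p₁,…,p₆ be 6 points in ℝ³ such that no 4 of them lie in a common affine plane. Then the 6 points can be partitioned into two triples {a,b,c} and {d,e,f} such that the relative interior of the triangle with vertices a,b,c intersects the boundary of the triangle with vertices d,e,f (the union of the segments [d,e], [e,f], [f,d]) in exactly one point. -/

import Mathlib

open Set

noncomputable section

/-- Points of `ℝ³`. -/
abbrev V3 := Fin 3 → ℝ

/-- The boundary of the triangle with vertices `a b c`:
the union of the segments `[a,b]`, `[b,c]`, `[c,a]`. -/
def triBoundary (a b c : V3) : Set V3 :=
  segment ℝ a b ∪ segment ℝ b c ∪ segment ℝ c a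

/-- The relative interior of the triangle with vertices `a b c`: convex combinations
`α•a + β•b + γ•c` with `α, β, γ > 0` and `α + β + γ = 1`. -/
def triRelint (a b c : V3) : Set V3 :=
  {x | ∃ α β γ : ℝ, 0 < α ∧ 0 < β ∧ 0 < γ ∧ α + β + γ = 1 ∧ x = α • a + β • b + γ • c}


section
variable (p : Fin 6 → V3)
    (hgen : ∀ s : Finset (Fin 6), s.card = 4 → ¬ Coplanar ℝ (p '' ↑s))

include hgen in
lemma indepS (s : Finset (Fin 6)) (h : s.card = 4) :
    AffineIndependent ℝ (fun i : ↥s => p ↑i) := by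
  have hnc := hgen s h
  have hcard : Fintype.card ↥s = 2 + 2 := by simp [h]
  rw [affineIndependent_iff_not_finrank_vectorSpan_le ℝ _ hcard]
  intro hle
  apply hnc
  have hfin : (p '' ↑s).Finite := (s.finite_toSet).image p
  haveI := finiteDimensional_vectorSpan_of_finite ℝ hfin
  rw [coplanar_iff_finrank_le_two]
  rw [Set.image_eq_range]; exact hle
end

section
variable (p : Fin 6 → V3)
    (hgen : ∀ s : Finset (Fin 6), s.card = 4 → ¬ Coplanar ℝ (p '' ↑s))

include hgen in
lemma L4 (ν : Fin 6 → ℝ) (h1 : ∑ i, ν i = 0) (h2 : ∑ i, ν i • p i = 0)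
    {a b : Fin 6} (hab : a ≠ b) (ha : ν a = 0) (hb : ν b = 0) : ν = 0 := by
  classical
  set s : Finset (Fin 6) := ({a, b} : Finset (Fin 6))ᶜ with hs
  have hcard : s.card = 4 := by
    rw [hs, Finset.card_compl, Finset.card_insert_of_notMem (by simp [hab]),
      Finset.card_singleton]
    rfl
  have hzero : ∀ i ∈ sᶜ, ν i = 0 := by
    intro i hi
    rw [hs, compl_compl] at hi
    rcases Finset.mem_insert.1 hi with rfl | hi
    · exact ha
    · rw [Finset.mem_singleton.1 hi]; exact hb
  have hsum : ∑ i ∈ s, ν i = 0 := by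
    rw [← h1, ← Finset.sum_add_sum_compl s (fun i => ν i)]
    rw [Finset.sum_eq_zero hzero]; ring
  have hsum2 : ∑ i ∈ s, ν i • p i = 0 := by
    rw [← Finset.sum_add_sum_compl s (fun i => ν i • p i)] at h2
    rw [Finset.sum_eq_zero (fun i (hi : i ∈ sᶜ) => by rw [hzero i hi, zero_smul])] at h2
    simpa using h2
  have hai := indepS p hgen s hcard
  have key := affineIndependent_iff.1 hai Finset.univ (fun i => ν ↑i)
    (by rw [Finset.sum_coe_sort s (fun i => ν i)] at *; exact hsum)
    (by rw [Finset.sum_coe_sort s (fun i => ν i • p i)] at *; exact hsum2)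
  funext i
  by_cases hi : i ∈ s
  · exact key ⟨i, hi⟩ (Finset.mem_univ _)
  · exact hzero i (Finset.mem_compl.2 hi)
end

section
variable (p : Fin 6 → V3)

lemma exists_dep (z : Fin 6) : ∃ ν : Fin 6 → ℝ, ν z = 0 ∧ (∑ i, ν i) = 0 ∧
    (∑ i, ν i • p i) = 0 ∧ ν ≠ 0 := by
  classical
  have hni : ¬ AffineIndependent ℝ (fun j : Fin 5 => p (z.succAbove j)) := by
    rw [affineIndependent_iff_not_finrank_vectorSpan_le ℝ _ (by simp : Fintype.card (Fin 5) = 3 + 2)]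
    push_neg
    calc Module.finrank ℝ ↥(vectorSpan ℝ (Set.range fun j : Fin 5 => p (z.succAbove j)))
        ≤ Module.finrank ℝ V3 := Submodule.finrank_le _
      _ = 3 := Module.finrank_fin_fun ℝ
  rw [affineIndependent_iff] at hni
  push_neg at hni
  obtain ⟨t, w, hw0, hwc, e, het, hwe⟩ := hni
  refine ⟨fun i => ∑ j ∈ t, if z.succAbove j = i then w j else 0, ?_, ?_, ?_, ?_⟩
  · exact Finset.sum_eq_zero fun j _ => by
      rw [if_neg (Fin.succAbove_ne z j)]
  · have : (∑ i, ∑ j ∈ t, if z.succAbove j = i then w j else 0) = ∑ j ∈ t, w j := by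
      rw [Finset.sum_comm]
      exact Finset.sum_congr rfl fun j _ => by
        rw [Finset.sum_ite_eq Finset.univ (z.succAbove j) (fun _ => w j)]
        simp
    rw [this, hw0]
  · have h1 : ∀ i, (∑ j ∈ t, if z.succAbove j = i then w j else 0) • p i
        = ∑ j ∈ t, (if z.succAbove j = i then w j • p (z.succAbove j) else 0) := by
      intro i
      rw [Finset.sum_smul]
      exact Finset.sum_congr rfl fun j _ => by
        split <;> rename_i h
        · rw [h]
        · rw [zero_smul]
    have h2 : (∑ i, ∑ j ∈ t, if z.succAbove j = i then w j • p (z.succAbove j) else 0)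
        = ∑ j ∈ t, w j • p (z.succAbove j) := by
      rw [Finset.sum_comm]
      exact Finset.sum_congr rfl fun j _ => by
        rw [Finset.sum_ite_eq Finset.univ (z.succAbove j)
          (fun _ => w j • p (z.succAbove j))]
        simp
    simp_rw [h1]
    rw [h2, hwc]
  · intro hcon
    apply hwe
    have := congrFun hcon (z.succAbove e)
    simp only [Pi.zero_apply] at this
    rw [← this]
    rw [Finset.sum_congr rfl (fun j (hj : j ∈ t) => by
      rw [show ((if z.succAbove j = z.succAbove e then w j else 0) : ℝ)
        = if j = e then w j else 0 from by
          simp only [Fin.succAbove_right_injective.eq_iff]])]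
    rw [Finset.sum_ite_eq' t e w, if_pos het]
end

section
variable (p : Fin 6 → V3)
    (hgen : ∀ s : Finset (Fin 6), s.card = 4 → ¬ Coplanar ℝ (p '' ↑s))

include hgen in
lemma NZ (ν : Fin 6 → ℝ) (h1 : ∑ i, ν i = 0) (h2 : ∑ i, ν i • p i = 0)
    (hne : ν ≠ 0) (z : Fin 6) (hz : ν z = 0) : ∀ i, i ≠ z → ν i ≠ 0 := by
  intro i hi hcon
  exact hne (L4 p hgen ν h1 h2 hi hcon hz)

variable (u v : Fin 6 → ℝ)
  (hu4 : u 4 = 0) (hus : ∑ i, u i = 0) (huc : ∑ i, u i • p i = 0) (hun : u ≠ 0)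
  (hv5 : v 5 = 0) (hvs : ∑ i, v i = 0) (hvc : ∑ i, v i • p i = 0) (hvn : v ≠ 0)

def CC (z i : Fin 6) : ℝ := u z * v i - v z * u i

omit p in
lemma CCself (z : Fin 6) : CC u v z z = 0 := by simp [CC]; ring

omit p in
lemma CCanti (z i : Fin 6) : CC u v z i = - CC u v i z := by simp [CC]; ring

omit p hu4 hv5 in
include hus hvs in
lemma CCsum (z : Fin 6) : ∑ i, CC u v z i = 0 := by
  simp only [CC]
  rw [Finset.sum_sub_distrib, ← Finset.mul_sum, ← Finset.mul_sum, hus, hvs]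
  ring

omit hu4 hv5 in
include huc hvc in
lemma CCcombo (z : Fin 6) : ∑ i, CC u v z i • p i = 0 := by
  simp only [CC, sub_smul, mul_smul]
  rw [Finset.sum_sub_distrib, ← Finset.smul_sum, ← Finset.smul_sum, huc, hvc]
  simp

include hgen hu4 hus huc hun hv5 hvs hvc hvn in
lemma CCex (z : Fin 6) : ∃ i, CC u v z i ≠ 0 := by
  have hUnz : ∀ i, i ≠ (4 : Fin 6) → u i ≠ 0 := NZ p hgen u hus huc hun 4 hu4
  have hVnz : ∀ i, i ≠ (5 : Fin 6) → v i ≠ 0 := NZ p hgen v hvs hvc hvn 5 hv5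
  by_cases hz : z = 4
  · refine ⟨5, ?_⟩
    subst hz
    simp only [CC, hu4]
    have h1 : v 4 ≠ 0 := hVnz 4 (by decide)
    have h2 : u 5 ≠ 0 := hUnz 5 (by decide)
    intro hcon
    rw [zero_mul, zero_sub, neg_eq_zero, mul_eq_zero] at hcon
    tauto
  · refine ⟨4, ?_⟩
    simp only [CC, hu4]
    have h1 : v 4 ≠ 0 := hVnz 4 (by decide)
    have h2 : u z ≠ 0 := hUnz z hz
    intro hcon
    rw [mul_zero, sub_zero, mul_eq_zero] at hcon
    tauto

include hgen hu4 hus huc hun hv5 hvs hvc hvn in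
lemma CCnz (z i : Fin 6) (hi : i ≠ z) : CC u v z i ≠ 0 := by
  obtain ⟨j, hj⟩ := CCex p hgen u v hu4 hus huc hun hv5 hvs hvc hvn z
  have hne : (fun i => CC u v z i) ≠ 0 := by
    intro hcon; exact hj (congrFun hcon j)
  exact NZ p hgen (fun i => CC u v z i) (CCsum u v hus hvs z)
    (CCcombo p u v huc hvc z) hne z (CCself u v z) i hi

include hgen hu4 hus huc hun hv5 hvs hvc hvn in
lemma CCuniq (ν : Fin 6 → ℝ) (h1 : ∑ i, ν i = 0) (h2 : ∑ i, ν i • p i = 0)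
    (z : Fin 6) (hz : ν z = 0) : ∃ c : ℝ, ν = fun i => c * CC u v z i := by
  classical
  set i₀ : Fin 6 := if z = 4 then 5 else 4 with hi₀
  have hi₀z : i₀ ≠ z := by
    rw [hi₀]; split <;> rename_i h
    · rw [h]; decide
    · exact fun hc => h hc.symm
  have hC : CC u v z i₀ ≠ 0 := CCnz p hgen u v hu4 hus huc hun hv5 hvs hvc hvn z i₀ hi₀z
  set c : ℝ := ν i₀ / CC u v z i₀ with hc
  refine ⟨c, ?_⟩
  have hμ : (fun i => ν i - c * CC u v z i) = 0 := by
    apply L4 p hgen _ ?_ ?_ (Ne.symm hi₀z)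
    · rw [hz, CCself, mul_zero, sub_zero]
    · rw [hc, div_mul_cancel₀ _ hC, sub_self]
    · rw [Finset.sum_sub_distrib, h1, ← Finset.mul_sum,
        CCsum u v hus hvs z, mul_zero, sub_zero]
    · simp only [sub_smul, mul_smul]
      rw [Finset.sum_sub_distrib, h2, ← Finset.smul_sum,
        CCcombo p u v huc hvc z]
      simp
  funext i
  have := congrFun hμ i
  simp only [Pi.zero_apply] at this
  linarith

omit hgen hu4 hv5 huc hvc in
include hus hvs in
lemma CCsigns (z : Fin 6) (hex : ∃ i, CC u v z i ≠ 0) :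
    (∃ i, 0 < CC u v z i) ∧ (∃ i, CC u v z i < 0) := by
  obtain ⟨j, hj⟩ := hex
  have hsum := CCsum u v hus hvs z
  constructor
  · by_contra hcon
    push_neg at hcon
    rcases hj.lt_or_gt with h | h
    · have : ∑ i, CC u v z i < 0 := by
        apply Finset.sum_neg' (fun i _ => hcon i) ⟨j, Finset.mem_univ j, h⟩
      linarith
    · exact absurd h (not_lt.2 (hcon j))
  · by_contra hcon
    push_neg at hcon
    rcases hj.lt_or_gt with h | h
    · exact absurd h (not_lt.2 (hcon j))
    · have : 0 < ∑ i, CC u v z i := by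
        apply Finset.sum_pos' (fun i _ => hcon i) ⟨j, Finset.mem_univ j, h⟩
      linarith
end


def sB (ε : Fin 6 → Bool) (z j : Fin 6) : Bool :=
  if z < j then ε z == ε j else !(ε z == ε j)

def patB (ε : Fin 6 → Bool) (x y z A B C : Fin 6) : Bool :=
  (sB ε z x == sB ε z y) && (sB ε z A != sB ε z x) && (sB ε z B != sB ε z x)
    && (sB ε z C != sB ε z x)

set_option maxRecDepth 10000 in
theorem coreLemma : ∀ ε : Fin 6 → Bool,
    (∀ z : Fin 6, (∃ j, j ≠ z ∧ sB ε z j = true) ∧ (∃ j, j ≠ z ∧ sB ε z j = false)) →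
    ∃ τ : Equiv.Perm (Fin 6),
      patB ε (τ 3) (τ 4) (τ 5) (τ 0) (τ 1) (τ 2) = true ∧
      patB ε (τ 4) (τ 5) (τ 3) (τ 0) (τ 1) (τ 2) = false ∧
      patB ε (τ 5) (τ 3) (τ 4) (τ 0) (τ 1) (τ 2) = false := by decide



section
variable (u v : Fin 6 → ℝ)

open Classical in
def eta (i : Fin 6) : ℝ := if 0 < v i ∨ (v i = 0 ∧ 0 < u i) then 1 else -1

lemma eta_cases (i : Fin 6) : eta u v i = 1 ∨ eta u v i = -1 := by
  unfold eta; split <;> simp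

lemma eta_pm (i : Fin 6) : eta u v i * eta u v i = 1 := by
  rcases eta_cases u v i with h | h <;> rw [h] <;> norm_num

lemma crossV_eq (i j : Fin 6) :
    (eta u v i * u i) * (eta u v j * v j) - (eta u v i * v i) * (eta u v j * u j)
      = eta u v i * eta u v j * (u i * v j - v i * u j) := by ring

lemma hY (i : Fin 6) (hvi : v i ≠ 0) : 0 < eta u v i * v i := by
  unfold eta
  split <;> rename_i h
  · rcases h with h | ⟨h, _⟩
    · linarith [one_mul (v i)]
    · exact absurd h hvi
  · push_neg at h
    rcases lt_trichotomy (v i) 0 with hl | hl | hl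
    · nlinarith
    · exact absurd hl hvi
    · exact absurd hl (not_lt.2 h.1)

lemma hX (i : Fin 6) (hvi : v i = 0) (hui : u i ≠ 0) : 0 < eta u v i * u i := by
  unfold eta
  split <;> rename_i h
  · rcases h with h | ⟨_, h⟩
    · rw [hvi] at h; linarith
    · linarith
  · push_neg at h
    have := h.2 hvi
    rcases lt_trichotomy (u i) 0 with hl | hl | hl
    · nlinarith
    · exact absurd hl hui
    · exact absurd hl (not_lt.2 this)
end

section
variable (u v : Fin 6 → ℝ)

lemma signS (i j : Fin 6)
    (hcv : 0 < (eta u v i * u i) * (eta u v j * v j) - (eta u v i * v i) * (eta u v j * u j)) :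
    (0 < u i * v j - v i * u j ↔ eta u v i = eta u v j) := by
  rw [crossV_eq] at hcv
  rcases eta_cases u v i with h1 | h1 <;> rcases eta_cases u v j with h2 | h2 <;>
    rw [h1, h2] at hcv ⊢ <;> norm_num at hcv ⊢ <;> linarith

-- the main bridge
lemma exists_rho (p : Fin 6 → V3)
    (hCnz : ∀ z i : Fin 6, i ≠ z → u z * v i - v z * u i ≠ 0)
    (hv5 : v 5 = 0) (hvnz : ∀ i : Fin 6, i ≠ 5 → v i ≠ 0) (hu5 : u 5 ≠ 0) :
    ∃ (ρE : Equiv.Perm (Fin 6)) (ε : Fin 6 → Bool), ∀ a b : Fin 6, a ≠ b →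
      (sB ε a b = true ↔ 0 < u (ρE a) * v (ρE b) - v (ρE a) * u (ρE b)) := by
  classical
  set key : Fin 6 → ℝ := fun i => -(u i / v i) with hkey
  set K : Fin 5 → ℝ := fun a => key a.castSucc with hK
  have hcs5 : ∀ b : Fin 5, (b.castSucc : Fin 6) ≠ 5 := by
    intro b h
    exact absurd (h ▸ b.castSucc_lt_last) (by decide)
  have hKinj : Function.Injective K := by
    intro a b hab
    have ha5 := hcs5 a
    have hb5 := hcs5 b
    by_contra hne
    have hcc : (a.castSucc : Fin 6) ≠ b.castSucc := fun h => hne (Fin.castSucc_inj.1 h)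
    apply hCnz b.castSucc a.castSucc hcc
    have hva := hvnz _ ha5
    have hvb := hvnz _ hb5
    have : u a.castSucc / v a.castSucc = u b.castSucc / v b.castSucc := by
      have := congrArg Neg.neg hab
      simpa [hK, hkey] using this
    rw [div_eq_div_iff hva hvb] at this
    linarith
  have hKsm : StrictMono (K ∘ Tuple.sort K) :=
    (Tuple.monotone_sort K).strictMono_of_injective (hKinj.comp (Tuple.sort K).injective)
  set τ5 := Tuple.sort K with hτ5
  set ρ : Fin 6 → Fin 6 := Fin.cases (5 : Fin 6) (fun b => ((τ5 b).castSucc : Fin 6)) with hρ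
  have hρinj : Function.Injective ρ := by
    intro a b hab
    rcases Fin.eq_zero_or_eq_succ a with rfl | ⟨a', rfl⟩ <;>
      rcases Fin.eq_zero_or_eq_succ b with rfl | ⟨b', rfl⟩ <;>
        simp only [hρ, Fin.cases_zero, Fin.cases_succ] at hab ⊢
    · exact absurd hab.symm (hcs5 _)
    · exact absurd hab (hcs5 _)
    · rw [Fin.castSucc_inj] at hab
      rw [τ5.injective hab]
  set ρE : Equiv.Perm (Fin 6) := Equiv.ofBijective ρ
    ((Finite.injective_iff_bijective).1 hρinj) with hρE
  have hρEρ : ∀ a, ρE a = ρ a := fun a => rfl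
  set ε : Fin 6 → Bool := fun a => if (0:ℝ) < eta u v (ρ a) then true else false with hε
  -- positivity of normalized cross for sorted order
  have hcross : ∀ a b : Fin 6, a < b →
      0 < (eta u v (ρ a) * u (ρ a)) * (eta u v (ρ b) * v (ρ b))
        - (eta u v (ρ a) * v (ρ a)) * (eta u v (ρ b) * u (ρ b)) := by
    intro a b hab
    rcases Fin.eq_zero_or_eq_succ a with rfl | ⟨a', rfl⟩
    · -- ρ 0 = 5
      have hb0 : b ≠ 0 := fun h => by rw [h] at hab; exact absurd hab (by simp)
      rcases Fin.eq_zero_or_eq_succ b with rfl | ⟨b', rfl⟩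
      · exact absurd rfl hb0
      have h50 : (ρ (0 : Fin 6)) = 5 := by simp [hρ]
      have hbb : ρ b'.succ = (τ5 b').castSucc := by simp [hρ]
      rw [h50, hbb, hv5]
      have h1 := mul_pos (hX u v 5 hv5 hu5) (hY u v ((τ5 b').castSucc : Fin 6) (hvnz _ (hcs5 _)))
      nlinarith [h1]
    · rcases Fin.eq_zero_or_eq_succ b with rfl | ⟨b', rfl⟩
      · exact absurd hab (by simp)
      have ha : ρ a'.succ = (τ5 a').castSucc := by simp [hρ]
      have hb : ρ b'.succ = (τ5 b').castSucc := by simp [hρ]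
      have hab' : a' < b' := by rwa [Fin.succ_lt_succ_iff] at hab
      have hkeylt : K (τ5 a') < K (τ5 b') := hKsm hab'
      rw [ha, hb]
      have hva := hvnz _ (hcs5 (τ5 a'))
      have hvb := hvnz _ (hcs5 (τ5 b'))
      have hYa := hY u v ((τ5 a').castSucc : Fin 6) hva
      have hYb := hY u v ((τ5 b').castSucc : Fin 6) hvb
      -- from key inequality derive cross positivity
      have hkk : -(u ((τ5 a').castSucc) / v ((τ5 a').castSucc))
          < -(u ((τ5 b').castSucc) / v ((τ5 b').castSucc)) := hkeylt
      set i := ((τ5 a').castSucc : Fin 6)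
      set j := ((τ5 b').castSucc : Fin 6)
      have hdiv : u j / v j < u i / v i := by linarith
      -- multiply out:  u j * (eta u v j * ...) careful with sign of v
      -- u j / v j < u i / v i with v i,v j ≠ 0; multiply by eta u v i v i * eta u v j v j > 0
      have hstep : (u j / v j) * ((eta u v i * v i) * (eta u v j * v j))
          < (u i / v i) * ((eta u v i * v i) * (eta u v j * v j)) := by
        apply mul_lt_mul_of_pos_right hdiv (mul_pos hYa hYb)
      have e1 : (u j / v j) * ((eta u v i * v i) * (eta u v j * v j)) = (eta u v i * v i) * (eta u v j * u j) := by
        field_simp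
      have e2 : (u i / v i) * ((eta u v i * v i) * (eta u v j * v j)) = (eta u v i * u i) * (eta u v j * v j) := by
        field_simp
      rw [e1, e2] at hstep
      linarith
  have hsign : ∀ a b : Fin 6, a < b →
      (0 < u (ρ a) * v (ρ b) - v (ρ a) * u (ρ b) ↔ (ε a = ε b)) := by
    intro a b hab
    rw [signS u v _ _ (hcross a b hab)]
    rw [hε]
    simp only []
    rcases eta_cases u v (ρ a) with h1 | h1 <;> rcases eta_cases u v (ρ b) with h2 | h2 <;>
      rw [h1, h2] <;> norm_num
  refine ⟨ρE, ε, ?_⟩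
  intro a b hab
  rcases lt_or_gt_of_ne hab with h | h
  · rw [sB, if_pos h, beq_iff_eq]
    rw [hρEρ, hρEρ, hsign a b h]
  · rw [sB, if_neg (not_lt.2 (le_of_lt h))]
    have hCab : u (ρ b) * v (ρ a) - v (ρ b) * u (ρ a) ≠ 0 :=
      hCnz (ρ b) (ρ a) (fun hc => hab (hρinj hc))
    have hanti : u (ρ a) * v (ρ b) - v (ρ a) * u (ρ b)
        = -(u (ρ b) * v (ρ a) - v (ρ b) * u (ρ a)) := by ring
    rw [hρEρ, hρEρ, hanti]
    constructor
    · intro hBn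
      simp only [Bool.not_eq_true', beq_eq_false_iff_ne] at hBn
      have hnlt : ¬ (0 < u (ρ b) * v (ρ a) - v (ρ b) * u (ρ a)) := by
        intro hp
        exact hBn ((hsign b a h).1 hp).symm
      have : u (ρ b) * v (ρ a) - v (ρ b) * u (ρ a) < 0 :=
        lt_of_le_of_ne (not_lt.1 hnlt) hCab
      linarith
    · intro hp
      have hneg : u (ρ b) * v (ρ a) - v (ρ b) * u (ρ a) < 0 := by linarith
      have hne : ε b ≠ ε a := by
        intro he
        have := (hsign b a h).2 he
        linarith
      simp only [Bool.not_eq_true', beq_eq_false_iff_ne]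
      exact fun he => hne he.symm


lemma sum6 {M : Type*} [AddCommMonoid M] (g : Fin 6 → M) {a b c d e f : Fin 6}
    (h1 : a≠b) (h2 : a≠c) (h3 : a≠d) (h4 : a≠e) (h5 : a≠f) (h6 : b≠c) (h7 : b≠d)
    (h8 : b≠e) (h9 : b≠f) (h10 : c≠d) (h11 : c≠e) (h12 : c≠f) (h13 : d≠e)
    (h14 : d≠f) (h15 : e≠f) :
    ∑ i, g i = g a + (g b + (g c + (g d + (g e + g f)))) := by
  have huniv : (insert a (insert b (insert c (insert d (insert e ({f} : Finset (Fin 6)))))))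
      = Finset.univ := by
    apply Finset.eq_univ_of_card
    rw [Finset.card_insert_of_notMem (by simp [h1, h2, h3, h4, h5]),
      Finset.card_insert_of_notMem (by simp [h6, h7, h8, h9]),
      Finset.card_insert_of_notMem (by simp [h10, h11, h12]),
      Finset.card_insert_of_notMem (by simp [h13, h14]),
      Finset.card_insert_of_notMem (by simp [h15]),
      Finset.card_singleton]
    rfl
  rw [← huniv,
    Finset.sum_insert (by simp [h1, h2, h3, h4, h5]),
    Finset.sum_insert (by simp [h6, h7, h8, h9]),
    Finset.sum_insert (by simp [h10, h11, h12]),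
    Finset.sum_insert (by simp [h13, h14]),
    Finset.sum_insert (by simp [h15]),
    Finset.sum_singleton]

section G
variable (p : Fin 6 → V3) (D : Fin 6 → Fin 6 → ℝ)
  (hDsum : ∀ z, ∑ i, D z i = 0)
  (hDcombo : ∀ z, ∑ i, D z i • p i = 0)
  (hDzz : ∀ z, D z z = 0)
  (hDnz : ∀ z i, i ≠ z → D z i ≠ 0)
  (hDuniq : ∀ ν : Fin 6 → ℝ, (∑ i, ν i = 0) → (∑ i, ν i • p i = 0) → ∀ z, ν z = 0 →
      ∃ cc, ν = fun i => cc * D z i)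

include hDsum hDcombo hDzz hDnz hDuniq in
set_option maxHeartbeats 1000000 in
theorem lemG {a b c d e f : Fin 6}
    (h1 : a≠b) (h2 : a≠c) (h3 : a≠d) (h4 : a≠e) (h5 : a≠f) (h6 : b≠c) (h7 : b≠d)
    (h8 : b≠e) (h9 : b≠f) (h10 : c≠d) (h11 : c≠e) (h12 : c≠f) (h13 : d≠e)
    (h14 : d≠f) (h15 : e≠f)
    (hp1 : 0 < D f d * D f e) (hp2 : D f a * D f d < 0) (hp3 : D f b * D f d < 0)
    (hp4 : D f c * D f d < 0)
    (hn2 : ¬(0 < D d e * D d f ∧ D d a * D d e < 0 ∧ D d b * D d e < 0 ∧ D d c * D d e < 0))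
    (hn3 : ¬(0 < D e f * D e d ∧ D e a * D e f < 0 ∧ D e b * D e f < 0 ∧ D e c * D e f < 0)) :
    ∃ x, triRelint (p a) (p b) (p c) ∩ triBoundary (p d) (p e) (p f) = {x} := by
  classical
  obtain ⟨s0, hs0, ν, hνD, hνd, hνe, hνa, hνb, hνc, hνf, hνsum, hνcombo⟩ :
      ∃ (s0 : ℝ), s0 * s0 = 1 ∧ ∃ ν : Fin 6 → ℝ, (∀ i, ν i = s0 * D f i) ∧ 0 < ν d ∧
        0 < ν e ∧ ν a < 0 ∧ ν b < 0 ∧ ν c < 0 ∧ ν f = 0 ∧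
        (∑ i, ν i) = 0 ∧ (∑ i, ν i • p i) = 0 := by
    set s0 : ℝ := if 0 < D f d then 1 else -1 with hs0def
    have hs0 : s0 * s0 = 1 := by rw [hs0def]; split <;> norm_num
    have hd0 : 0 < s0 * D f d := by
      rw [hs0def]
      split <;> rename_i h
      · simpa using h
      · have hne := hDnz f d h14
        rcases hne.lt_or_gt with hl | hl
        · nlinarith
        · exact absurd hl h
    refine ⟨s0, hs0, fun i => s0 * D f i, fun i => rfl, ?_, ?_, ?_, ?_, ?_, ?_, ?_, ?_⟩
    · exact hd0
    · show 0 < s0 * D f e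
      nlinarith
    · show s0 * D f a < 0
      nlinarith
    · show s0 * D f b < 0
      nlinarith
    · show s0 * D f c < 0
      nlinarith
    · show s0 * D f f = 0
      rw [hDzz, mul_zero]
    · rw [← Finset.mul_sum, hDsum, mul_zero]
    · simp only [mul_smul]
      rw [← Finset.smul_sum, hDcombo, smul_zero]
  have hS : 0 < ν d + ν e := by linarith
  -- coordinate form of the dependence
  have hsum6 := sum6 ν h1 h2 h3 h4 h5 h6 h7 h8 h9 h10 h11 h12 h13 h14 h15
  have hsumexp : ν a + (ν b + (ν c + (ν d + (ν e + ν f)))) = 0 := by rw [← hsum6]; exact hνsum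
  have hcombo6 := sum6 (fun i => ν i • p i) h1 h2 h3 h4 h5 h6 h7 h8 h9 h10 h11 h12 h13 h14 h15
  have hcomboexp : ν a • p a + (ν b • p b + (ν c • p c + (ν d • p d + (ν e • p e + ν f • p f)))) = 0 := by
    rw [← hcombo6]; exact hνcombo
  have hco : ∀ t' : Fin 3, ν a * p a t' + (ν b * p b t' + (ν c * p c t'
      + (ν d * p d t' + ν e * p e t'))) = 0 := by
    intro t'
    have h0 := congrFun hcomboexp t'
    simp only [Pi.add_apply, Pi.smul_apply, smul_eq_mul, Pi.zero_apply] at h0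
    rw [hνf] at h0
    linarith
  set x : V3 := (ν d / (ν d + ν e)) • p d + (ν e / (ν d + ν e)) • p e with hx
  refine ⟨x, ?_⟩
  rw [Set.eq_singleton_iff_unique_mem]
  refine ⟨⟨?_, ?_⟩, ?_⟩
  · -- x ∈ triRelint
    refine ⟨-ν a / (ν d + ν e), -ν b / (ν d + ν e), -ν c / (ν d + ν e),
      div_pos (by linarith) hS, div_pos (by linarith) hS, div_pos (by linarith) hS, ?_, ?_⟩
    · rw [← add_div, ← add_div, div_eq_one_iff_eq hS.ne']
      rw [hνf] at hsumexp
      linarith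
    · funext t'
      simp only [hx, Pi.add_apply, Pi.smul_apply, smul_eq_mul]
      linear_combination (1 / (ν d + ν e)) * hco t'
  · -- x ∈ triBoundary : in segment p d p e
    left; left
    exact ⟨ν d / (ν d + ν e), ν e / (ν d + ν e), le_of_lt (div_pos hνd hS),
      le_of_lt (div_pos hνe hS), by rw [← add_div, div_eq_one_iff_eq hS.ne'], rfl⟩
  · -- uniqueness
    rintro q ⟨⟨α, β, γ, hα, hβ, hγ, hsum1, hqeq⟩, hbd⟩
    have hqco : ∀ t', q t' = α * p a t' + β * p b t' + γ * p c t' := by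
      intro t'
      rw [hqeq]
      simp [Pi.add_apply, Pi.smul_apply, smul_eq_mul]
    rcases hbd with (hseg | hseg) | hseg
    · -- segment p d p e : q = x
      obtain ⟨t, s, ht, hs, hts, heq⟩ := hseg
      have hq1 : ∀ t', t * p d t' + s * p e t' = q t' := by
        intro t'
        have := congrFun heq t'
        simpa [Pi.add_apply, Pi.smul_apply, smul_eq_mul] using this
      set μ : Fin 6 → ℝ := fun i =>
        if i = d then t else if i = e then s else if i = a then -α
          else if i = b then -β else if i = c then -γ else 0 with hμ
      have hμa : μ a = -α := by simp [hμ, h3, h4]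
      have hμb : μ b = -β := by simp [hμ, h7, h8, h1.symm]
      have hμc : μ c = -γ := by simp [hμ, h10, h11, h2.symm, h6.symm]
      have hμd : μ d = t := by simp [hμ]
      have hμe : μ e = s := by simp [hμ, h13.symm]
      have hμf : μ f = 0 := by simp [hμ, h14.symm, h15.symm, h5.symm, h9.symm, h12.symm]
      have hμsum : ∑ i, μ i = 0 := by
        rw [sum6 μ h1 h2 h3 h4 h5 h6 h7 h8 h9 h10 h11 h12 h13 h14 h15,
          hμa, hμb, hμc, hμd, hμe, hμf]
        linarith
      have hμcombo : ∑ i, μ i • p i = 0 := by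
        rw [sum6 (fun i => μ i • p i) h1 h2 h3 h4 h5 h6 h7 h8 h9 h10 h11 h12 h13 h14 h15]
        simp only [hμa, hμb, hμc, hμd, hμe, hμf]
        funext t'
        simp only [Pi.add_apply, Pi.smul_apply, smul_eq_mul, Pi.zero_apply]
        linear_combination hq1 t' + hqco t'
      obtain ⟨cc, hcc⟩ := hDuniq μ hμsum hμcombo f hμf
      have hμν : ∀ i, μ i = (cc * s0) * ν i := by
        intro i
        rw [congrFun hcc i, hνD i]
        linear_combination (-(cc * D f i)) * hs0
      have hc' : 0 < cc * s0 := by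
        have := hμν a
        rw [hμa] at this
        nlinarith
      have hcS : (cc * s0) * (ν d + ν e) = 1 := by
        have hd' := hμν d
        have he' := hμν e
        rw [hμd] at hd'
        rw [hμe] at he'
        linarith
      have htv : t = ν d / (ν d + ν e) := by
        have hd' := hμν d
        rw [hμd] at hd'
        rw [hd', eq_div_iff hS.ne']
        linear_combination (ν d) * hcS
      have hsv : s = ν e / (ν d + ν e) := by
        have he' := hμν e
        rw [hμe] at he'
        rw [he', eq_div_iff hS.ne']
        linear_combination (ν e) * hcS
      rw [← heq, htv, hsv, hx]
    · -- segment p e p f : contradiction with hn2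
      obtain ⟨t, s, ht, hs, hts, heq⟩ := hseg
      exfalso
      have hq1 : ∀ t', t * p e t' + s * p f t' = q t' := by
        intro t'
        have := congrFun heq t'
        simpa [Pi.add_apply, Pi.smul_apply, smul_eq_mul] using this
      set μ : Fin 6 → ℝ := fun i =>
        if i = e then t else if i = f then s else if i = a then -α
          else if i = b then -β else if i = c then -γ else 0 with hμ
      have hμa : μ a = -α := by simp [hμ, h4, h5]
      have hμb : μ b = -β := by simp [hμ, h8, h9, h1.symm]
      have hμc : μ c = -γ := by simp [hμ, h11, h12, h2.symm, h6.symm]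
      have hμe : μ e = t := by simp [hμ]
      have hμf : μ f = s := by simp [hμ, h15.symm]
      have hμd : μ d = 0 := by simp [hμ, h13, h14, h3.symm, h7.symm, h10.symm]
      have hμsum : ∑ i, μ i = 0 := by
        rw [sum6 μ h1 h2 h3 h4 h5 h6 h7 h8 h9 h10 h11 h12 h13 h14 h15,
          hμa, hμb, hμc, hμd, hμe, hμf]
        linarith
      have hμcombo : ∑ i, μ i • p i = 0 := by
        rw [sum6 (fun i => μ i • p i) h1 h2 h3 h4 h5 h6 h7 h8 h9 h10 h11 h12 h13 h14 h15]
        simp only [hμa, hμb, hμc, hμd, hμe, hμf]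
        funext t'
        simp only [Pi.add_apply, Pi.smul_apply, smul_eq_mul, Pi.zero_apply]
        linear_combination hq1 t' + hqco t'
      obtain ⟨cc, hcc⟩ := hDuniq μ hμsum hμcombo d hμd
      have hccne : cc ≠ 0 := by
        intro h0
        have := congrFun hcc a
        rw [hμa, h0, zero_mul] at this
        linarith
      have htpos : 0 < t := by
        rcases ht.lt_or_eq with h' | h'
        · exact h'
        · exfalso
          have := congrFun hcc e
          rw [hμe, ← h'] at this
          exact hDnz d e h13.symm (by
            rcases mul_eq_zero.1 this.symm with h'' | h''
            · exact absurd h'' hccne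
            · exact h'')
      have hspos : 0 < s := by
        rcases hs.lt_or_eq with h' | h'
        · exact h'
        · exfalso
          have := congrFun hcc f
          rw [hμf, ← h'] at this
          exact hDnz d f h14.symm (by
            rcases mul_eq_zero.1 this.symm with h'' | h''
            · exact absurd h'' hccne
            · exact h'')
      apply hn2
      have hce := congrFun hcc e
      have hcf := congrFun hcc f
      have hca := congrFun hcc a
      have hcb := congrFun hcc b
      have hcg := congrFun hcc c
      rw [hμe] at hce; rw [hμf] at hcf; rw [hμa] at hca; rw [hμb] at hcb; rw [hμc] at hcg
      have hcc2 : 0 < cc * cc := by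
        rcases hccne.lt_or_gt with h' | h'
        · exact mul_pos_of_neg_of_neg h' h'
        · exact mul_pos h' h'
      exact ⟨by nlinarith [mul_pos htpos hspos], by nlinarith [mul_pos hα htpos],
        by nlinarith [mul_pos hβ htpos], by nlinarith [mul_pos hγ htpos]⟩
    · -- segment p f p d : contradiction with hn3
      obtain ⟨t, s, ht, hs, hts, heq⟩ := hseg
      exfalso
      have hq1 : ∀ t', t * p f t' + s * p d t' = q t' := by
        intro t'
        have := congrFun heq t'
        simpa [Pi.add_apply, Pi.smul_apply, smul_eq_mul] using this
      set μ : Fin 6 → ℝ := fun i =>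
        if i = f then t else if i = d then s else if i = a then -α
          else if i = b then -β else if i = c then -γ else 0 with hμ
      have hμa : μ a = -α := by simp [hμ, h5, h3]
      have hμb : μ b = -β := by simp [hμ, h9, h7, h1.symm]
      have hμc : μ c = -γ := by simp [hμ, h12, h10, h2.symm, h6.symm]
      have hμf : μ f = t := by simp [hμ]
      have hμd : μ d = s := by simp [hμ, h14]
      have hμe : μ e = 0 := by simp [hμ, h15, h13.symm, h4.symm, h8.symm, h11.symm]
      have hμsum : ∑ i, μ i = 0 := by
        rw [sum6 μ h1 h2 h3 h4 h5 h6 h7 h8 h9 h10 h11 h12 h13 h14 h15,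
          hμa, hμb, hμc, hμd, hμe, hμf]
        linarith
      have hμcombo : ∑ i, μ i • p i = 0 := by
        rw [sum6 (fun i => μ i • p i) h1 h2 h3 h4 h5 h6 h7 h8 h9 h10 h11 h12 h13 h14 h15]
        simp only [hμa, hμb, hμc, hμd, hμe, hμf]
        funext t'
        simp only [Pi.add_apply, Pi.smul_apply, smul_eq_mul, Pi.zero_apply]
        linear_combination hq1 t' + hqco t'
      obtain ⟨cc, hcc⟩ := hDuniq μ hμsum hμcombo e hμe
      have hccne : cc ≠ 0 := by
        intro h0
        have := congrFun hcc a
        rw [hμa, h0, zero_mul] at this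
        linarith
      have htpos : 0 < t := by
        rcases ht.lt_or_eq with h' | h'
        · exact h'
        · exfalso
          have := congrFun hcc f
          rw [hμf, ← h'] at this
          exact hDnz e f h15.symm (by
            rcases mul_eq_zero.1 this.symm with h'' | h''
            · exact absurd h'' hccne
            · exact h'')
      have hspos : 0 < s := by
        rcases hs.lt_or_eq with h' | h'
        · exact h'
        · exfalso
          have := congrFun hcc d
          rw [hμd, ← h'] at this
          exact hDnz e d h13 (by
            rcases mul_eq_zero.1 this.symm with h'' | h''
            · exact absurd h'' hccne
            · exact h'')
      apply hn3
      have hcf := congrFun hcc f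
      have hcd := congrFun hcc d
      have hca := congrFun hcc a
      have hcb := congrFun hcc b
      have hcg := congrFun hcc c
      rw [hμf] at hcf; rw [hμd] at hcd; rw [hμa] at hca; rw [hμb] at hcb; rw [hμc] at hcg
      have hcc2 : 0 < cc * cc := by
        rcases hccne.lt_or_gt with h' | h'
        · exact mul_pos_of_neg_of_neg h' h'
        · exact mul_pos h' h'
      exact ⟨by nlinarith [mul_pos htpos hspos], by nlinarith [mul_pos hα htpos],
        by nlinarith [mul_pos hβ htpos], by nlinarith [mul_pos hγ htpos]⟩
end G


/-- If no 4 of 6 points in `ℝ³` lie in a common affine plane, then the 6 points can be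
partitioned into two triples such that the relative interior of the triangle spanned by the
first triple meets the boundary of the triangle spanned by the second triple in exactly
one point. -/
theorem stmt_0 (p : Fin 6 → V3)
    (hgen : ∀ s : Finset (Fin 6), s.card = 4 → ¬ Coplanar ℝ (p '' ↑s)) :
    ∃ σ : Equiv.Perm (Fin 6), ∃ x : V3,
      triRelint (p (σ 0)) (p (σ 1)) (p (σ 2)) ∩
        triBoundary (p (σ 3)) (p (σ 4)) (p (σ 5)) = {x} := by
  classical
  obtain ⟨u, hu4, hus, huc, hun⟩ := exists_dep p 4
  obtain ⟨v, hv5, hvs, hvc, hvn⟩ := exists_dep p 5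
  have hCnz : ∀ z i : Fin 6, i ≠ z → u z * v i - v z * u i ≠ 0 := by
    intro z i hi
    exact CCnz p hgen u v hu4 hus huc hun hv5 hvs hvc hvn z i hi
  have hvnz : ∀ i : Fin 6, i ≠ 5 → v i ≠ 0 := NZ p hgen v hvs hvc hvn 5 hv5
  have hu5 : u 5 ≠ 0 := NZ p hgen u hus huc hun 4 hu4 5 (by decide)
  obtain ⟨ρE, ε, hbridge⟩ := exists_rho u v p hCnz hv5 hvnz hu5
  -- hypothesis for the core lemma
  have hcore : ∀ z : Fin 6, (∃ j, j ≠ z ∧ sB ε z j = true) ∧ (∃ j, j ≠ z ∧ sB ε z j = false) := by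
    intro z
    have hex := CCex p hgen u v hu4 hus huc hun hv5 hvs hvc hvn (ρE z)
    obtain ⟨hpos, hneg⟩ := CCsigns u v hus hvs (ρE z) hex
    constructor
    · obtain ⟨i, hi⟩ := hpos
      have hne : ρE.symm i ≠ z := by
        intro hzz
        rw [← hzz, Equiv.apply_symm_apply] at hi
        rw [CCself] at hi
        exact absurd hi (lt_irrefl 0)
      refine ⟨ρE.symm i, hne, ?_⟩
      rw [(hbridge z (ρE.symm i) (fun h => hne h.symm))]
      rw [Equiv.apply_symm_apply]
      unfold CC at hi
      exact hi
    · obtain ⟨i, hi⟩ := hneg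
      have hne : ρE.symm i ≠ z := by
        intro hzz
        rw [← hzz, Equiv.apply_symm_apply] at hi
        rw [CCself] at hi
        exact absurd hi (lt_irrefl 0)
      refine ⟨ρE.symm i, hne, ?_⟩
      have hiff := hbridge z (ρE.symm i) (fun h => hne h.symm)
      rw [Equiv.apply_symm_apply] at hiff
      rcases Bool.eq_false_or_eq_true (sB ε z (ρE.symm i)) with h | h
      · rw [hiff] at h
        unfold CC at hi
        linarith
      · exact h
  obtain ⟨τ, hpat1, hpat2, hpat3⟩ := coreLemma ε hcore
  -- translation helpers
  have key : ∀ (b : Bool) (A : ℝ), A ≠ 0 → (b = true ↔ 0 < A) →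
      (b = true ∧ 0 < A) ∨ (b = false ∧ A < 0) := by
    intro b A hA hiff
    cases b
    · right
      refine ⟨rfl, lt_of_le_of_ne (not_lt.1 ?_) hA⟩
      intro hp
      exact absurd (hiff.2 hp) (by simp)
    · exact Or.inl ⟨rfl, hiff.1 rfl⟩
  have hsame : ∀ a b c' : Fin 6, b ≠ a → c' ≠ a → b ≠ c' →
      ((sB ε a b = sB ε a c') ↔ 0 < CC u v (ρE a) (ρE b) * CC u v (ρE a) (ρE c')) := by
    intro a b c' hba hca hbc
    have h1 := hbridge a b (fun h => hba h.symm)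
    have h2 := hbridge a c' (fun h => hca h.symm)
    have hnz1 : CC u v (ρE a) (ρE b) ≠ 0 := hCnz (ρE a) (ρE b)
      (fun h => hba (ρE.injective h))
    have hnz2 : CC u v (ρE a) (ρE c') ≠ 0 := hCnz (ρE a) (ρE c')
      (fun h => hca (ρE.injective h))
    unfold CC at hnz1 hnz2
    rcases key _ _ hnz1 h1 with ⟨e1, s1⟩ | ⟨e1, s1⟩ <;>
      rcases key _ _ hnz2 h2 with ⟨e2, s2⟩ | ⟨e2, s2⟩ <;> rw [e1, e2] <;> unfold CC
    · exact ⟨fun _ => mul_pos s1 s2, fun _ => rfl⟩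
    · constructor
      · intro h; exact absurd h (by simp)
      · intro h; nlinarith
    · constructor
      · intro h; exact absurd h (by simp)
      · intro h; nlinarith
    · exact ⟨fun _ => mul_pos_of_neg_of_neg s1 s2, fun _ => rfl⟩
  have hdiff : ∀ a b c' : Fin 6, b ≠ a → c' ≠ a → b ≠ c' →
      ((sB ε a b ≠ sB ε a c') ↔ CC u v (ρE a) (ρE b) * CC u v (ρE a) (ρE c') < 0) := by
    intro a b c' hba hca hbc
    have hnz1 : CC u v (ρE a) (ρE b) ≠ 0 := hCnz (ρE a) (ρE b)
      (fun h => hba (ρE.injective h))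
    have hnz2 : CC u v (ρE a) (ρE c') ≠ 0 := hCnz (ρE a) (ρE c')
      (fun h => hca (ρE.injective h))
    have hprodnz : CC u v (ρE a) (ρE b) * CC u v (ρE a) (ρE c') ≠ 0 := by
      unfold CC at hnz1 hnz2 ⊢
      exact mul_ne_zero hnz1 hnz2
    rw [ne_eq, hsame a b c' hba hca hbc]
    constructor
    · intro h
      exact lt_of_le_of_ne (not_lt.1 h) hprodnz
    · intro h hcon
      linarith
  -- distinctness of positions
  have hτ : ∀ i j : Fin 6, i ≠ j → τ i ≠ τ j := fun i j h hc => h (τ.injective hc)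
  -- unfold the three boolean patterns
  simp only [patB, Bool.and_eq_true, beq_iff_eq, bne_iff_ne, ne_eq] at hpat1
  obtain ⟨⟨⟨hq1, hq2⟩, hq3⟩, hq4⟩ := hpat1
  have hp1 := (hsame (τ 5) (τ 3) (τ 4) (hτ 3 5 (by decide)) (hτ 4 5 (by decide))
    (hτ 3 4 (by decide))).1 hq1
  have hp2 := (hdiff (τ 5) (τ 0) (τ 3) (hτ 0 5 (by decide)) (hτ 3 5 (by decide))
    (hτ 0 3 (by decide))).1 hq2
  have hp3 := (hdiff (τ 5) (τ 1) (τ 3) (hτ 1 5 (by decide)) (hτ 3 5 (by decide))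
    (hτ 1 3 (by decide))).1 hq3
  have hp4 := (hdiff (τ 5) (τ 2) (τ 3) (hτ 2 5 (by decide)) (hτ 3 5 (by decide))
    (hτ 2 3 (by decide))).1 hq4
  have hn2 : ¬(0 < CC u v (ρE (τ 3)) (ρE (τ 4)) * CC u v (ρE (τ 3)) (ρE (τ 5)) ∧
      CC u v (ρE (τ 3)) (ρE (τ 0)) * CC u v (ρE (τ 3)) (ρE (τ 4)) < 0 ∧
      CC u v (ρE (τ 3)) (ρE (τ 1)) * CC u v (ρE (τ 3)) (ρE (τ 4)) < 0 ∧
      CC u v (ρE (τ 3)) (ρE (τ 2)) * CC u v (ρE (τ 3)) (ρE (τ 4)) < 0) := by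
    rintro ⟨c1, c2, c3, c4⟩
    have : patB ε (τ 4) (τ 5) (τ 3) (τ 0) (τ 1) (τ 2) = true := by
      simp only [patB, Bool.and_eq_true, beq_iff_eq, bne_iff_ne, ne_eq]
      refine ⟨⟨⟨?_, ?_⟩, ?_⟩, ?_⟩
      · exact (hsame (τ 3) (τ 4) (τ 5) (hτ 4 3 (by decide)) (hτ 5 3 (by decide))
          (hτ 4 5 (by decide))).2 c1
      · exact (hdiff (τ 3) (τ 0) (τ 4) (hτ 0 3 (by decide)) (hτ 4 3 (by decide))
          (hτ 0 4 (by decide))).mpr c2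
      · exact (hdiff (τ 3) (τ 1) (τ 4) (hτ 1 3 (by decide)) (hτ 4 3 (by decide))
          (hτ 1 4 (by decide))).mpr c3
      · exact (hdiff (τ 3) (τ 2) (τ 4) (hτ 2 3 (by decide)) (hτ 4 3 (by decide))
          (hτ 2 4 (by decide))).mpr c4
    rw [this] at hpat2
    exact absurd hpat2 (by simp)
  have hn3 : ¬(0 < CC u v (ρE (τ 4)) (ρE (τ 5)) * CC u v (ρE (τ 4)) (ρE (τ 3)) ∧
      CC u v (ρE (τ 4)) (ρE (τ 0)) * CC u v (ρE (τ 4)) (ρE (τ 5)) < 0 ∧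
      CC u v (ρE (τ 4)) (ρE (τ 1)) * CC u v (ρE (τ 4)) (ρE (τ 5)) < 0 ∧
      CC u v (ρE (τ 4)) (ρE (τ 2)) * CC u v (ρE (τ 4)) (ρE (τ 5)) < 0) := by
    rintro ⟨c1, c2, c3, c4⟩
    have : patB ε (τ 5) (τ 3) (τ 4) (τ 0) (τ 1) (τ 2) = true := by
      simp only [patB, Bool.and_eq_true, beq_iff_eq, bne_iff_ne, ne_eq]
      refine ⟨⟨⟨?_, ?_⟩, ?_⟩, ?_⟩
      · exact (hsame (τ 4) (τ 5) (τ 3) (hτ 5 4 (by decide)) (hτ 3 4 (by decide))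
          (hτ 5 3 (by decide))).2 c1
      · exact (hdiff (τ 4) (τ 0) (τ 5) (hτ 0 4 (by decide)) (hτ 5 4 (by decide))
          (hτ 0 5 (by decide))).mpr c2
      · exact (hdiff (τ 4) (τ 1) (τ 5) (hτ 1 4 (by decide)) (hτ 5 4 (by decide))
          (hτ 1 5 (by decide))).mpr c3
      · exact (hdiff (τ 4) (τ 2) (τ 5) (hτ 2 4 (by decide)) (hτ 5 4 (by decide))
          (hτ 2 5 (by decide))).mpr c4
    rw [this] at hpat3
    exact absurd hpat3 (by simp)
  -- apply the geometric lemma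
  set σ : Equiv.Perm (Fin 6) := τ.trans ρE with hσ
  have hσa : ∀ i : Fin 6, σ i = ρE (τ i) := fun i => rfl
  have hdist : ∀ i j : Fin 6, i ≠ j → σ i ≠ σ j := fun i j h hc => h (σ.injective hc)
  obtain ⟨x, hx⟩ := lemG p (CC u v)
    (fun z => CCsum u v hus hvs z)
    (fun z => CCcombo p u v huc hvc z)
    (fun z => CCself u v z)
    (fun z i hi => CCnz p hgen u v hu4 hus huc hun hv5 hvs hvc hvn z i hi)
    (fun ν hs hc z hz => CCuniq p hgen u v hu4 hus huc hun hv5 hvs hvc hvn ν hs hc z hz)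
    (a := σ 0) (b := σ 1) (c := σ 2) (d := σ 3) (e := σ 4) (f := σ 5)
    (hdist 0 1 (by decide)) (hdist 0 2 (by decide)) (hdist 0 3 (by decide))
    (hdist 0 4 (by decide)) (hdist 0 5 (by decide)) (hdist 1 2 (by decide))
    (hdist 1 3 (by decide)) (hdist 1 4 (by decide)) (hdist 1 5 (by decide))
    (hdist 2 3 (by decide)) (hdist 2 4 (by decide)) (hdist 2 5 (by decide))
    (hdist 3 4 (by decide)) (hdist 3 5 (by decide)) (hdist 4 5 (by decide))
    (by rw [hσa, hσa, hσa]; exact hp1)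
    (by rw [hσa, hσa, hσa]; exact hp2)
    (by rw [hσa, hσa, hσa]; exact hp3)
    (by rw [hσa, hσa, hσa]; exact hp4)
    (by rw [hσa, hσa, hσa, hσa, hσa, hσa]; exact hn2)
    (by rw [hσa, hσa, hσa, hσa, hσa, hσa]; exact hn3)
  exact ⟨σ, x, hx⟩
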